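/- For any finite simple graph G on n vertices with no isolated vertices, the maximum size of a minimal vertex cover of G is at least ⌈2√n − 2⌉. -/

import Mathlib

/-- `W` is a vertex cover of `G`: it meets every edge. -/
def IsVC {V : Type*} (G : SimpleGraph V) (W : Finset V) : Prop :=
  ∀ ⦃u v : V⦄, G.Adj u v → u ∈ W ∨ v ∈ W

/-- `W` is a minimal vertex cover of `G`. -/
def IsMinVC {V : Type*} (G : SimpleGraph V) (W : Finset V) : Prop :=
  IsVC G W ∧ ∀ W' : Finset V, W' ⊂ W → ¬ IsVC G W'

/-- The maximum size of a minimal vertex cover of `G`. -/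
noncomputable def tauMax {V : Type*} (G : SimpleGraph V) : ℕ :=
  sSup {k : ℕ | ∃ W : Finset V, IsMinVC G W ∧ W.card = k}

open Finset

open scoped Classical

section Aux

variable {V : Type*} [Fintype V] (G : SimpleGraph V)

/-- Any independent finset extends to a maximal independent (hence dominating) set. -/
private lemma aux_extend_to_maximal (B : Finset V)
    (hB : ∀ u ∈ B, ∀ v ∈ B, ¬ G.Adj u v) :
    ∃ S : Finset V, B ⊆ S ∧ (∀ u ∈ S, ∀ v ∈ S, ¬ G.Adj u v) ∧
      (∀ v : V, v ∉ S → ∃ u ∈ S, G.Adj u v) := by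
  classical
  let F : Finset (Finset V) :=
    univ.filter (fun T => B ⊆ T ∧ ∀ u ∈ T, ∀ v ∈ T, ¬ G.Adj u v)
  have hBF : B ∈ F := by
    simp only [F, mem_filter, mem_univ, true_and]
    exact ⟨subset_rfl, hB⟩
  obtain ⟨S, hSF, hmax⟩ := F.exists_max_image Finset.card ⟨B, hBF⟩
  simp only [F, mem_filter, mem_univ, true_and] at hSF
  obtain ⟨hBS, hSind⟩ := hSF
  refine ⟨S, hBS, hSind, ?_⟩
  intro v hv
  by_contra hno
  push_neg at hno
  have hins : insert v S ∈ F := by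
    simp only [F, mem_filter, mem_univ, true_and]
    refine ⟨hBS.trans (subset_insert _ _), ?_⟩
    intro a ha b hb
    rcases mem_insert.mp ha with rfl | haS
    · rcases mem_insert.mp hb with rfl | hbS
      · exact G.irrefl
      · exact fun h => hno b hbS (G.adj_symm h)
    · rcases mem_insert.mp hb with rfl | hbS
      · exact fun h => hno a haS h
      · exact hSind a haS b hbS
  have hle := hmax _ hins
  rw [card_insert_of_notMem hv] at hle
  omega

/-- There is a maximal independent set of minimum cardinality. -/
private lemma aux_exists_min_maxIndep :
    ∃ S : Finset V, (∀ u ∈ S, ∀ v ∈ S, ¬ G.Adj u v) ∧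
      (∀ v : V, v ∉ S → ∃ u ∈ S, G.Adj u v) ∧
      ∀ S' : Finset V, (∀ u ∈ S', ∀ v ∈ S', ¬ G.Adj u v) →
        (∀ v : V, v ∉ S' → ∃ u ∈ S', G.Adj u v) → S.card ≤ S'.card := by
  classical
  let F : Finset (Finset V) := univ.filter
    (fun T => (∀ u ∈ T, ∀ v ∈ T, ¬ G.Adj u v) ∧ (∀ v : V, v ∉ T → ∃ u ∈ T, G.Adj u v))
  obtain ⟨S₀, -, h1, h2⟩ := aux_extend_to_maximal G ∅ (by simp)
  have hne : F.Nonempty :=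
    ⟨S₀, by simp only [F, mem_filter, mem_univ, true_and]; exact ⟨h1, h2⟩⟩
  obtain ⟨S, hSF, hmin⟩ := F.exists_min_image Finset.card hne
  simp only [F, mem_filter, mem_univ, true_and] at hSF
  refine ⟨S, hSF.1, hSF.2, ?_⟩
  intro S' h1' h2'
  exact hmin S' (by simp only [F, mem_filter, mem_univ, true_and]; exact ⟨h1', h2'⟩)

/-- The exchange lemma: for a minimum maximal independent set `S` and an independent
set `A` disjoint from `S`, there is a set `T` (disjoint from `S` and `A`) of size at least
`|N(A) ∩ S| - |A|` all of whose `S`-neighbours lie in `N(A) ∩ S`. -/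
private lemma aux_exchange (S A : Finset V)
    (hSind : ∀ u ∈ S, ∀ v ∈ S, ¬ G.Adj u v)
    (hmin : ∀ S' : Finset V, (∀ u ∈ S', ∀ v ∈ S', ¬ G.Adj u v) →
      (∀ v : V, v ∉ S' → ∃ u ∈ S', G.Adj u v) → S.card ≤ S'.card)
    (hAS : ∀ a ∈ A, a ∉ S)
    (hAind : ∀ a ∈ A, ∀ b ∈ A, ¬ G.Adj a b) :
    ∃ T : Finset V, (∀ t ∈ T, t ∉ S) ∧ (∀ t ∈ T, t ∉ A) ∧
      (∀ t ∈ T, ∀ s ∈ S, G.Adj t s → ∃ a ∈ A, G.Adj a s) ∧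
      (S.filter (fun s => ∃ a ∈ A, G.Adj a s)).card ≤ A.card + T.card := by
  classical
  set NA := S.filter (fun s => ∃ a ∈ A, G.Adj a s) with hNA
  have hNAS : NA ⊆ S := filter_subset _ _
  set B := A ∪ (S \ NA) with hBdef
  have hBind : ∀ u ∈ B, ∀ v ∈ B, ¬ G.Adj u v := by
    intro u hu v hv
    rcases mem_union.mp hu with huA | huS
    · rcases mem_union.mp hv with hvA | hvS
      · exact hAind u huA v hvA
      · intro h
        exact (mem_sdiff.mp hvS).2
          (mem_filter.mpr ⟨(mem_sdiff.mp hvS).1, ⟨u, huA, h⟩⟩)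
    · rcases mem_union.mp hv with hvA | hvS
      · intro h
        exact (mem_sdiff.mp huS).2
          (mem_filter.mpr ⟨(mem_sdiff.mp huS).1, ⟨v, hvA, G.adj_symm h⟩⟩)
      · exact hSind u (mem_sdiff.mp huS).1 v (mem_sdiff.mp hvS).1
  obtain ⟨S', hBS', hS'ind, hS'dom⟩ := aux_extend_to_maximal G B hBind
  refine ⟨S' \ B, ?_, ?_, ?_, ?_⟩
  · intro t ht hts
    have htB := (mem_sdiff.mp ht).2
    have htS' := (mem_sdiff.mp ht).1
    have htNA : t ∈ NA := by
      by_contra h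
      exact htB (mem_union.mpr (Or.inr (mem_sdiff.mpr ⟨hts, h⟩)))
    obtain ⟨a, haA, hat⟩ := (mem_filter.mp htNA).2
    exact hS'ind a (hBS' (mem_union.mpr (Or.inl haA))) t htS' hat
  · intro t ht htA
    exact (mem_sdiff.mp ht).2 (mem_union.mpr (Or.inl htA))
  · intro t ht s hs hadj
    by_contra h
    push_neg at h
    have hsB : s ∈ B := mem_union.mpr (Or.inr (mem_sdiff.mpr ⟨hs, by
      intro hsNA
      obtain ⟨a, haA, has⟩ := (mem_filter.mp hsNA).2
      exact h a haA has⟩))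
    exact hS'ind t (mem_sdiff.mp ht).1 s (hBS' hsB) hadj
  · have h1 : (S \ NA).card + NA.card = S.card := card_sdiff_add_card_eq_card hNAS
    have h2 : B.card = A.card + (S \ NA).card := by
      rw [hBdef]
      refine card_union_of_disjoint ?_
      rw [disjoint_left]
      intro a haA haS
      exact hAS a haA (mem_sdiff.mp haS).1
    have h3 : (S' \ B).card + B.card = S'.card := card_sdiff_add_card_eq_card hBS'
    have h4 : S.card ≤ S'.card := hmin S' hS'ind hS'dom
    omega

/-- The key counting estimate: a minimum maximal independent set `S` satisfies
`4|S| ≤ |V \ S|² + 4`. -/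
private lemma aux_key_count (hiso : ∀ v : V, ∃ u : V, G.Adj v u) (S : Finset V)
    (hSind : ∀ u ∈ S, ∀ v ∈ S, ¬ G.Adj u v)
    (hSdom : ∀ v : V, v ∉ S → ∃ u ∈ S, G.Adj u v)
    (hSmin : ∀ S' : Finset V, (∀ u ∈ S', ∀ v ∈ S', ¬ G.Adj u v) →
      (∀ v : V, v ∉ S' → ∃ u ∈ S', G.Adj u v) → S.card ≤ S'.card) :
    4 * S.card ≤ (univ \ S).card ^ 2 + 4 := by
  classical
  set W := (univ \ S : Finset V) with hWdef
  set c := W.card with hc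
  rcases S.eq_empty_or_nonempty with rfl | ⟨s₀, hs₀⟩
  · simp
  obtain ⟨u₀, hu₀⟩ := hiso s₀
  have hu₀S : u₀ ∉ S := fun h => hSind s₀ hs₀ u₀ h hu₀
  have hu₀W : u₀ ∈ W := mem_sdiff.mpr ⟨mem_univ _, hu₀S⟩
  -- the vertex of `W` with the most neighbours in `S`
  obtain ⟨w₁, hw₁W, hw₁max⟩ :=
    W.exists_max_image (fun w => (S.filter (fun s => G.Adj w s)).card) ⟨u₀, hu₀W⟩
  set NA₁ := S.filter (fun s => G.Adj w₁ s) with hNA₁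
  set d := NA₁.card with hd
  have hw₁S : w₁ ∉ S := (mem_sdiff.mp hw₁W).2
  have hdmax : ∀ w ∈ W, (S.filter (fun s => G.Adj w s)).card ≤ d := hw₁max
  have hd1 : 1 ≤ d := by
    have h0 : s₀ ∈ S.filter (fun s => G.Adj u₀ s) := mem_filter.mpr ⟨hs₀, G.adj_symm hu₀⟩
    have h1 := hdmax u₀ hu₀W
    have hpos : 0 < (S.filter (fun s => G.Adj u₀ s)).card := card_pos.mpr ⟨s₀, h0⟩
    omega
  -- first exchange at w₁
  obtain ⟨T₁, hT₁S, hT₁A, hT₁prop', hT₁card'⟩ := aux_exchange G S {w₁} hSind hSmin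
    (by intro a ha; rw [mem_singleton] at ha; subst ha; exact hw₁S)
    (by intro a ha b hb; rw [mem_singleton] at ha; rw [mem_singleton] at hb
        subst ha; subst hb; exact G.irrefl)
  have hfilter1 : S.filter (fun s => ∃ a ∈ ({w₁} : Finset V), G.Adj a s) = NA₁ := by
    rw [hNA₁]
    apply filter_congr
    intro s _
    simp
  have hT₁card : d ≤ 1 + T₁.card := by
    rw [hfilter1, card_singleton] at hT₁card'
    omega
  have hT₁prop : ∀ t ∈ T₁, ∀ s ∈ S, G.Adj t s → G.Adj w₁ s := by
    intro t ht s hs hadj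
    obtain ⟨a, ha, h⟩ := hT₁prop' t ht s hs hadj
    rw [mem_singleton] at ha
    subst ha
    exact h
  have hT₁W : ∀ t ∈ T₁, t ∈ W := fun t ht => mem_sdiff.mpr ⟨mem_univ _, hT₁S t ht⟩
  have hw₁T₁ : w₁ ∉ T₁ := fun h => hT₁A w₁ h (mem_singleton_self w₁)
  set K₁ := insert w₁ T₁ with hK₁
  have hK₁W : K₁ ⊆ W := by
    intro x hx
    rcases mem_insert.mp hx with rfl | hx
    · exact hw₁W
    · exact hT₁W x hx
  have hK₁card : K₁.card = T₁.card + 1 := card_insert_of_notMem hw₁T₁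
  set R := W \ K₁ with hR
  have hRcard : R.card + K₁.card = c := card_sdiff_add_card_eq_card hK₁W
  set Sout := S \ NA₁ with hSout
  have hSoutcard : Sout.card + d = S.card := card_sdiff_add_card_eq_card (filter_subset _ _)
  by_cases hcase : ∀ w ∈ R, (Sout.filter (fun s => G.Adj w s)).card ≤ d - 1
  · -- Case A : all remaining vertices have at most d-1 neighbours outside N(w₁)
    have hnbr : ∀ s ∈ Sout, ∃ w ∈ R, G.Adj w s := by
      intro s hsout
      have hsS := (mem_sdiff.mp hsout).1
      have hsNA : s ∉ NA₁ := (mem_sdiff.mp hsout).2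
      obtain ⟨u, hu⟩ := hiso s
      have huS : u ∉ S := fun h => hSind s hsS u h hu
      have hus : G.Adj u s := G.adj_symm hu
      refine ⟨u, mem_sdiff.mpr ⟨mem_sdiff.mpr ⟨mem_univ _, huS⟩, ?_⟩, hus⟩
      intro hK
      rcases mem_insert.mp hK with rfl | hK
      · exact hsNA (mem_filter.mpr ⟨hsS, hus⟩)
      · exact hsNA (mem_filter.mpr ⟨hsS, hT₁prop u hK s hsS hus⟩)
    have hsub : Sout ⊆ R.biUnion (fun w => Sout.filter (fun s => G.Adj w s)) := by
      intro s hs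
      obtain ⟨w, hwR, hws⟩ := hnbr s hs
      exact mem_biUnion.mpr ⟨w, hwR, mem_filter.mpr ⟨hs, hws⟩⟩
    have hsum : Sout.card ≤ R.card * (d - 1) :=
      le_trans (card_le_card hsub) (card_biUnion_le_card_mul _ _ _ hcase)
    -- arithmetic
    obtain ⟨e, he⟩ : ∃ e, c = d + e := ⟨c - d, by omega⟩
    obtain ⟨f, hf⟩ : ∃ f, d = 1 + f := ⟨d - 1, by omega⟩
    have hRle : R.card ≤ e := by omega
    have hSoutle : Sout.card ≤ e * f := by
      have h1 : R.card * (d - 1) ≤ e * f := by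
        have h2 : d - 1 = f := by omega
        rw [h2]
        exact Nat.mul_le_mul_right _ hRle
      omega
    have hScard : S.card = Sout.card + d := by omega
    have hfin : (4 * S.card : ℤ) ≤ (c : ℤ) ^ 2 + 4 := by
      have h1 : (S.card : ℤ) = (Sout.card : ℤ) + d := by exact_mod_cast hScard
      have h2 : (Sout.card : ℤ) ≤ (e : ℤ) * f := by exact_mod_cast hSoutle
      have h3 : (c : ℤ) = d + e := by exact_mod_cast he
      have h4 : (d : ℤ) = 1 + f := by exact_mod_cast hf
      nlinarith [sq_nonneg ((e : ℤ) + 1 - f)]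
    exact_mod_cast hfin
  · -- Case B : some w₂ outside K₁ has d neighbours in Sout
    push_neg at hcase
    obtain ⟨w₂, hw₂R, hw₂big'⟩ := hcase
    have hw₂big : d ≤ (Sout.filter (fun s => G.Adj w₂ s)).card := by omega
    have hw₂W : w₂ ∈ W := (mem_sdiff.mp hw₂R).1
    have hw₂K₁ : w₂ ∉ K₁ := (mem_sdiff.mp hw₂R).2
    have hw₂ne : w₂ ≠ w₁ := fun h => hw₂K₁ (h ▸ mem_insert_self w₁ T₁)
    have hw₂T₁ : w₂ ∉ T₁ := fun h => hw₂K₁ (mem_insert_of_mem h)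
    have hw₂S : w₂ ∉ S := (mem_sdiff.mp hw₂W).2
    set NA₂ := S.filter (fun s => G.Adj w₂ s) with hNA₂
    have hsub2 : Sout.filter (fun s => G.Adj w₂ s) ⊆ NA₂ :=
      filter_subset_filter _ sdiff_subset
    have h2le : NA₂.card ≤ d := hdmax w₂ hw₂W
    have heq2 : Sout.filter (fun s => G.Adj w₂ s) = NA₂ :=
      eq_of_subset_of_card_le hsub2 (le_trans h2le hw₂big)
    have hNA₂Sout : NA₂ ⊆ Sout := by
      rw [← heq2]
      exact filter_subset _ _
    have hNA₂card : NA₂.card = d := by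
      have := congrArg Finset.card heq2
      omega
    have hdisj : Disjoint NA₁ NA₂ := by
      rw [disjoint_right]
      intro s hs2 hs1
      exact (mem_sdiff.mp (hNA₂Sout hs2)).2 hs1
    -- construct in both subcases a blocking set K of size ≥ 2d inside W
    obtain ⟨K, hKW, hKbig, hKblock⟩ :
        ∃ K : Finset V, K ⊆ W ∧ 2 * d ≤ K.card ∧
          ∀ u ∈ K, ∀ s ∈ S, G.Adj u s → s ∈ NA₁ ∪ NA₂ := by
      by_cases hadj12 : G.Adj w₁ w₂
      · -- w₁ and w₂ adjacent: two separate exchanges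
        obtain ⟨T₂, hT₂S, hT₂A, hT₂prop', hT₂card'⟩ := aux_exchange G S {w₂} hSind hSmin
          (by intro a ha; rw [mem_singleton] at ha; subst ha; exact hw₂S)
          (by intro a ha b hb; rw [mem_singleton] at ha; rw [mem_singleton] at hb
              subst ha; subst hb; exact G.irrefl)
        have hfilter2 : S.filter (fun s => ∃ a ∈ ({w₂} : Finset V), G.Adj a s) = NA₂ := by
          rw [hNA₂]
          apply filter_congr
          intro s _
          simp
        have hT₂card : d ≤ 1 + T₂.card := by
          rw [hfilter2, card_singleton, hNA₂card] at hT₂card'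
          omega
        have hT₂prop : ∀ t ∈ T₂, ∀ s ∈ S, G.Adj t s → G.Adj w₂ s := by
          intro t ht s hs hadj
          obtain ⟨a, ha, h⟩ := hT₂prop' t ht s hs hadj
          rw [mem_singleton] at ha
          subst ha
          exact h
        have hT₁T₂ : ∀ t ∈ T₁, t ∉ T₂ := by
          intro t ht1 ht2
          obtain ⟨u, huS, hut⟩ := hSdom t (hT₁S t ht1)
          have htu : G.Adj t u := G.adj_symm hut
          have hu1 : u ∈ NA₁ := mem_filter.mpr ⟨huS, hT₁prop t ht1 u huS htu⟩
          have hu2 : u ∈ NA₂ := mem_filter.mpr ⟨huS, hT₂prop t ht2 u huS htu⟩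
          exact (mem_sdiff.mp (hNA₂Sout hu2)).2 hu1
        have hw₁T₂ : w₁ ∉ T₂ := by
          intro h
          obtain ⟨s₁, hs₁⟩ := card_pos.mp (show 0 < NA₁.card by omega)
          have hs₁S := (mem_filter.mp hs₁).1
          have hadj1 : G.Adj w₁ s₁ := (mem_filter.mp hs₁).2
          have : s₁ ∈ NA₂ := mem_filter.mpr ⟨hs₁S, hT₂prop w₁ h s₁ hs₁S hadj1⟩
          exact (mem_sdiff.mp (hNA₂Sout this)).2 hs₁
        have hw₂T₂ : w₂ ∉ T₂ := fun h => hT₂A w₂ h (mem_singleton_self w₂)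
        have hdisjT : Disjoint T₁ T₂ := disjoint_left.mpr hT₁T₂
        have hw₂notU : w₂ ∉ T₁ ∪ T₂ := by
          intro h
          rcases mem_union.mp h with h | h
          · exact hw₂T₁ h
          · exact hw₂T₂ h
        have hw₁notI : w₁ ∉ insert w₂ (T₁ ∪ T₂) := by
          intro h
          rcases mem_insert.mp h with h | h
          · exact hw₂ne h.symm
          · rcases mem_union.mp h with h | h
            · exact hw₁T₁ h
            · exact hw₁T₂ h
        refine ⟨insert w₁ (insert w₂ (T₁ ∪ T₂)), ?_, ?_, ?_⟩
        · intro x hx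
          rcases mem_insert.mp hx with rfl | hx
          · exact hw₁W
          rcases mem_insert.mp hx with rfl | hx
          · exact hw₂W
          rcases mem_union.mp hx with h | h
          · exact hT₁W x h
          · exact mem_sdiff.mpr ⟨mem_univ _, hT₂S x h⟩
        · rw [card_insert_of_notMem hw₁notI, card_insert_of_notMem hw₂notU,
            card_union_of_disjoint hdisjT]
          omega
        · intro u hu s hs hadj
          rcases mem_insert.mp hu with rfl | hu
          · exact mem_union.mpr (Or.inl (mem_filter.mpr ⟨hs, hadj⟩))
          rcases mem_insert.mp hu with rfl | hu
          · exact mem_union.mpr (Or.inr (mem_filter.mpr ⟨hs, hadj⟩))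
          rcases mem_union.mp hu with h | h
          · exact mem_union.mpr (Or.inl (mem_filter.mpr ⟨hs, hT₁prop u h s hs hadj⟩))
          · exact mem_union.mpr (Or.inr (mem_filter.mpr ⟨hs, hT₂prop u h s hs hadj⟩))
      · -- w₁ and w₂ non-adjacent: a joint exchange
        have hw₁A : w₁ ∈ ({w₁, w₂} : Finset V) := mem_insert_self _ _
        have hw₂A : w₂ ∈ ({w₁, w₂} : Finset V) := mem_insert_of_mem (mem_singleton_self _)
        obtain ⟨T, hTS, hTA, hTprop, hTcard'⟩ := aux_exchange G S {w₁, w₂} hSind hSmin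
          (by intro a ha
              rcases mem_insert.mp ha with rfl | ha
              · exact hw₁S
              · rw [mem_singleton] at ha; subst ha; exact hw₂S)
          (by intro a ha b hb
              rcases mem_insert.mp ha with rfl | ha
              · rcases mem_insert.mp hb with rfl | hb
                · exact G.irrefl
                · rw [mem_singleton] at hb; subst hb; exact hadj12
              · rw [mem_singleton] at ha; subst ha
                rcases mem_insert.mp hb with rfl | hb
                · exact fun h => hadj12 (G.adj_symm h)
                · rw [mem_singleton] at hb; subst hb; exact G.irrefl)
        have hfilterU : S.filter (fun s => ∃ a ∈ ({w₁, w₂} : Finset V), G.Adj a s)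
            = NA₁ ∪ NA₂ := by
          ext s
          simp only [mem_filter, mem_union, hNA₁, hNA₂, mem_insert, mem_singleton]
          constructor
          · rintro ⟨hsS, a, (rfl | rfl), h⟩
            · exact Or.inl ⟨hsS, h⟩
            · exact Or.inr ⟨hsS, h⟩
          · rintro (⟨hsS, h⟩ | ⟨hsS, h⟩)
            · exact ⟨hsS, w₁, Or.inl rfl, h⟩
            · exact ⟨hsS, w₂, Or.inr rfl, h⟩
        have hcard2 : ({w₁, w₂} : Finset V).card = 2 := by
          rw [card_insert_of_notMem (by rw [mem_singleton]; exact fun h => hw₂ne h.symm),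
            card_singleton]
        have hNUcard : (NA₁ ∪ NA₂).card = d + d := by
          rw [card_union_of_disjoint hdisj, hNA₂card]
        have hTcard : 2 * d ≤ 2 + T.card := by
          rw [hfilterU, hcard2, hNUcard] at hTcard'
          omega
        have hw₁T : w₁ ∉ T := fun h => hTA w₁ h hw₁A
        have hw₂T : w₂ ∉ T := fun h => hTA w₂ h hw₂A
        have hw₁notI : w₁ ∉ insert w₂ T := by
          intro h
          rcases mem_insert.mp h with h | h
          · exact hw₂ne h.symm
          · exact hw₁T h
        refine ⟨insert w₁ (insert w₂ T), ?_, ?_, ?_⟩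
        · intro x hx
          rcases mem_insert.mp hx with rfl | hx
          · exact hw₁W
          rcases mem_insert.mp hx with rfl | hx
          · exact hw₂W
          · exact mem_sdiff.mpr ⟨mem_univ _, hTS x hx⟩
        · rw [card_insert_of_notMem hw₁notI,
            card_insert_of_notMem (fun h => hw₂T h)]
          omega
        · intro u hu s hs hadj
          rcases mem_insert.mp hu with rfl | hu
          · exact mem_union.mpr (Or.inl (mem_filter.mpr ⟨hs, hadj⟩))
          rcases mem_insert.mp hu with rfl | hu
          · exact mem_union.mpr (Or.inr (mem_filter.mpr ⟨hs, hadj⟩))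
          · obtain ⟨a, ha, h⟩ := hTprop u hu s hs hadj
            rcases mem_insert.mp ha with rfl | ha
            · exact mem_union.mpr (Or.inl (mem_filter.mpr ⟨hs, h⟩))
            · rw [mem_singleton] at ha; subst ha
              exact mem_union.mpr (Or.inr (mem_filter.mpr ⟨hs, h⟩))
    -- common tail of case B
    set R' := W \ K with hR'
    have hR'card : R'.card + K.card = c := card_sdiff_add_card_eq_card hKW
    set NU := NA₁ ∪ NA₂ with hNU
    have hNUS : NU ⊆ S := union_subset (filter_subset _ _) (filter_subset _ _)
    have hNUcard : NU.card = d + d := by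
      rw [hNU, card_union_of_disjoint hdisj, hNA₂card]
    set Sout' := S \ NU with hSout'
    have hSout'card : Sout'.card + NU.card = S.card := card_sdiff_add_card_eq_card hNUS
    have hnbr' : ∀ s ∈ Sout', ∃ w ∈ R', G.Adj w s := by
      intro s hsS'
      have hsS := (mem_sdiff.mp hsS').1
      have hsNU := (mem_sdiff.mp hsS').2
      obtain ⟨u, hu⟩ := hiso s
      have huS : u ∉ S := fun h => hSind s hsS u h hu
      have hus : G.Adj u s := G.adj_symm hu
      refine ⟨u, mem_sdiff.mpr ⟨mem_sdiff.mpr ⟨mem_univ _, huS⟩, ?_⟩, hus⟩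
      intro huK
      exact hsNU (hKblock u huK s hsS hus)
    have hsub' : Sout' ⊆ R'.biUnion (fun w => Sout'.filter (fun s => G.Adj w s)) := by
      intro s hs
      obtain ⟨w, hwR, hws⟩ := hnbr' s hs
      exact mem_biUnion.mpr ⟨w, hwR, mem_filter.mpr ⟨hs, hws⟩⟩
    have hbound : ∀ w ∈ R', (Sout'.filter (fun s => G.Adj w s)).card ≤ d := by
      intro w hwR'
      have hwW : w ∈ W := (mem_sdiff.mp hwR').1
      exact le_trans (card_le_card (filter_subset_filter _ sdiff_subset)) (hdmax w hwW)
    have hsum' : Sout'.card ≤ R'.card * d :=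
      le_trans (card_le_card hsub') (card_biUnion_le_card_mul _ _ _ hbound)
    -- arithmetic
    have h2dc : 2 * d ≤ c := by omega
    obtain ⟨e, he⟩ : ∃ e, c = 2 * d + e := ⟨c - 2 * d, by omega⟩
    have hR'le : R'.card ≤ e := by omega
    have hSle : Sout'.card ≤ e * d := le_trans hsum' (Nat.mul_le_mul_right _ hR'le)
    have hScard : S.card = Sout'.card + 2 * d := by omega
    have hfin : (4 * S.card : ℤ) ≤ (c : ℤ) ^ 2 + 4 := by
      have h1 : (S.card : ℤ) = (Sout'.card : ℤ) + 2 * d := by exact_mod_cast hScard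
      have h2 : (Sout'.card : ℤ) ≤ (e : ℤ) * d := by exact_mod_cast hSle
      have h3 : (c : ℤ) = 2 * d + e := by exact_mod_cast he
      have h4 : (1 : ℤ) ≤ (d : ℤ) := by exact_mod_cast hd1
      have hc2 : (c : ℤ) ^ 2 = 4 * (d : ℤ) ^ 2 + 4 * (d : ℤ) * (e : ℤ) + (e : ℤ) ^ 2 := by
        rw [h3]; ring
      have hsq1 : (0 : ℤ) ≤ ((d : ℤ) - 1) ^ 2 := sq_nonneg _
      have hsq2 : (0 : ℤ) ≤ (e : ℤ) ^ 2 := sq_nonneg _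
      have hexp1 : ((d : ℤ) - 1) ^ 2 = (d : ℤ) ^ 2 - 2 * d + 1 := by ring
      have hed : (e : ℤ) * d = (d : ℤ) * e := by ring
      linarith [h1, h2, hc2, hsq1, hsq2, hexp1, hed]
    exact_mod_cast hfin

end Aux

theorem stmt_1 {V : Type*} [Fintype V] (G : SimpleGraph V)
    (hiso : ∀ v : V, ∃ u : V, G.Adj v u) :
    ⌈2 * Real.sqrt (Fintype.card V) - 2⌉₊ ≤ tauMax G := by
  classical
  obtain ⟨S, hSind, hSdom, hSmin⟩ := aux_exists_min_maxIndep G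
  set W := (univ \ S : Finset V) with hWdef
  have hmvc : IsMinVC G W := by
    constructor
    · intro u v huv
      by_contra h
      push_neg at h
      have huS : u ∈ S := by
        by_contra h'
        exact h.1 (mem_sdiff.mpr ⟨mem_univ _, h'⟩)
      have hvS : v ∈ S := by
        by_contra h'
        exact h.2 (mem_sdiff.mpr ⟨mem_univ _, h'⟩)
      exact hSind u huS v hvS huv
    · intro W' hW' hVC
      obtain ⟨w, hwW, hwW'⟩ := exists_of_ssubset hW'
      have hwS : w ∉ S := (mem_sdiff.mp hwW).2
      obtain ⟨u, huS, hadj⟩ := hSdom w hwS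
      rcases hVC hadj with h | h
      · exact (mem_sdiff.mp (hW'.subset h)).2 huS
      · exact hwW' h
  have hbdd : BddAbove {k : ℕ | ∃ W' : Finset V, IsMinVC G W' ∧ W'.card = k} := by
    refine ⟨Fintype.card V, ?_⟩
    rintro k ⟨W', -, rfl⟩
    exact le_trans (card_le_univ W') (le_of_eq card_univ)
  have htau : W.card ≤ tauMax G :=
    le_csSup hbdd ⟨W, hmvc, rfl⟩
  have hkey : 4 * S.card ≤ W.card ^ 2 + 4 := aux_key_count G hiso S hSind hSdom hSmin
  have hn : W.card + S.card = Fintype.card V := by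
    rw [hWdef, card_sdiff_add_card_eq_card (subset_univ S), card_univ]
  have h4n : 4 * Fintype.card V ≤ (W.card + 2) ^ 2 := by nlinarith [hkey, hn]
  have hreal : 2 * Real.sqrt (Fintype.card V) - 2 ≤ (W.card : ℝ) := by
    have h1 : Real.sqrt (4 * (Fintype.card V : ℝ)) ≤
        Real.sqrt (((W.card : ℝ) + 2) ^ 2) := by
      apply Real.sqrt_le_sqrt
      exact_mod_cast h4n
    rw [Real.sqrt_sq (by positivity)] at h1
    have h2 : Real.sqrt (4 * (Fintype.card V : ℝ)) =
        2 * Real.sqrt (Fintype.card V) := by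
      rw [show (4 : ℝ) * (Fintype.card V : ℝ) = (2 : ℝ) ^ 2 * (Fintype.card V : ℝ) by
        norm_num, Real.sqrt_mul (by positivity), Real.sqrt_sq (by norm_num)]
    rw [h2] at h1
    linarith
  calc ⌈2 * Real.sqrt (Fintype.card V) - 2⌉₊ ≤ W.card := Nat.ceil_le.mpr hreal
    _ ≤ tauMax G := htau
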